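/- Let U be a complex Banach space and let X, Y be bounded linear operators on U satisfying X ∘ Y − Y ∘ X = Y and exp((2·π·Complex.I) • X) = 1. Fix m ∈ ℂ. For A = (a, b; c, d) ∈ SL₂(ℤ) and τ ∈ ℍ write A·τ = (aτ+b)/(cτ+d), and define (cτ+d)^X := exp((Complex.log (c*τ+d)) • X) using the principal branch of the complex logarithm. On functions F : ℍ × ℂ × U → ℂ define [F · A](τ, z, u) = exp( −2·π·Complex.I · m · c · z^2/(c*τ+d) ) · F( A·τ , z/(c*τ+d) , (cτ+d)^X ( exp( (−(c*z)/(c*τ+d)) • Y ) u ) ). Then this defines a right action of SL₂(ℤ): for all A, B ∈ SL₂(ℤ) and all (τ, z, u), one has [(F · A) · B](τ, z, u) = [F · (A*B)](τ, z, u). -/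

import Mathlib

open UpperHalfPlane
open scoped MatrixGroups Real

/-- The combined action of equation (1.1):
`[F · A](τ, z, u) = exp(-2πi m c z²/(cτ+d)) ·
  F(A·τ, z/(cτ+d), (cτ+d)^X (exp(-(cz/(cτ+d)) • Y) u))`,
where `(cτ+d)^X = exp(log(cτ+d) • X)` via the principal branch of log. -/
noncomputable def combinedSlash {U : Type*} [NormedAddCommGroup U] [NormedSpace ℂ U]
    [CompleteSpace U] (X Y : U →L[ℂ] U) (m : ℂ) (F : ℍ → ℂ → U → ℂ)
    (A : Matrix.SpecialLinearGroup (Fin 2) ℤ) : ℍ → ℂ → U → ℂ :=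
  fun τ z u =>
    Complex.exp (-2 * (π : ℂ) * Complex.I * m * ((A 1 0 : ℤ) : ℂ) * z ^ 2 /
        (((A 1 0 : ℤ) : ℂ) * (τ : ℂ) + ((A 1 1 : ℤ) : ℂ))) *
      F (A • τ) (z / (((A 1 0 : ℤ) : ℂ) * (τ : ℂ) + ((A 1 1 : ℤ) : ℂ)))
        ((NormedSpace.exp
            (Complex.log (((A 1 0 : ℤ) : ℂ) * (τ : ℂ) + ((A 1 1 : ℤ) : ℂ)) • X))
          ((NormedSpace.exp
              ((-(((A 1 0 : ℤ) : ℂ) * z) /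
                  (((A 1 0 : ℤ) : ℂ) * (τ : ℂ) + ((A 1 1 : ℤ) : ℂ))) • Y)) u))

namespace CSaux

lemma denom_ne_zero' (A : Matrix.SpecialLinearGroup (Fin 2) ℤ) (τ : ℍ) :
    ((A 1 0 : ℤ) : ℂ) * (τ : ℂ) + ((A 1 1 : ℤ) : ℂ) ≠ 0 := by
  have h := UpperHalfPlane.denom_ne_zero (A : GL (Fin 2) ℝ) τ
  simpa [UpperHalfPlane.denom] using h

lemma coe_smul' (A : Matrix.SpecialLinearGroup (Fin 2) ℤ) (τ : ℍ) :
    ((A • τ : ℍ) : ℂ) =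
      (((A 0 0 : ℤ) : ℂ) * (τ : ℂ) + ((A 0 1 : ℤ) : ℂ)) /
        (((A 1 0 : ℤ) : ℂ) * (τ : ℂ) + ((A 1 1 : ℤ) : ℂ)) := by
  rw [UpperHalfPlane.specialLinearGroup_apply]
  simp

lemma entry_mul (A B : Matrix.SpecialLinearGroup (Fin 2) ℤ) (i j : Fin 2) :
    (A * B) i j = A i 0 * B 0 j + A i 1 * B 1 j := by
  simp [Matrix.SpecialLinearGroup.coe_mul, Matrix.mul_apply, Fin.sum_univ_two]

lemma det_fact (B : Matrix.SpecialLinearGroup (Fin 2) ℤ) :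
    ((B 0 0 : ℤ) : ℂ) * ((B 1 1 : ℤ) : ℂ) - ((B 0 1 : ℤ) : ℂ) * ((B 1 0 : ℤ) : ℂ) = 1 := by
  have h := B.prop
  rw [Matrix.det_fin_two] at h
  exact_mod_cast congrArg (fun n : ℤ => (n : ℂ)) h

lemma frac1 (K cA cB cAB jA jB z : ℂ) (hjA : jA ≠ 0) (hjB : jB ≠ 0)
    (hH : cB * (jA * jB) + cA = cAB * jB) :
    K * cB * z ^ 2 / jB + K * cA * (z / jB) ^ 2 / jA = K * cAB * z ^ 2 / (jA * jB) := by
  field_simp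
  linear_combination (K * z ^ 2) * hH

lemma frac2 (cA cB cAB jA jB z : ℂ) (hjA : jA ≠ 0) (hjB : jB ≠ 0)
    (hH : cB * (jA * jB) + cA = cAB * jB) :
    -(cA * (z / jB)) / jA / jB + -(cB * z) / jB = -(cAB * z) / (jA * jB) := by
  field_simp
  linear_combination (-z) * hH

variable {𝔸 : Type*} [NormedRing 𝔸] [NormedAlgebra ℂ 𝔸] [CompleteSpace 𝔸]

lemma ratCont : ContinuousSMul ℚ ℂ := inferInstance

noncomputable abbrev ratAlg : NormedAlgebra ℚ 𝔸 := NormedAlgebra.restrictScalars ℚ ℂ 𝔸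

attribute [local instance] ratAlg

attribute [local instance] ratCont

lemma pow_mul_eq {X Y : 𝔸} (h : X * Y = Y * (X + 1)) (s : ℂ) (n : ℕ) :
    (s • X) ^ n * Y = Y * (s • (X + 1)) ^ n := by
  induction n with
  | zero => simp
  | succ n ih =>
    calc (s • X) ^ (n+1) * Y = (s • X) * ((s • X) ^ n * Y) := by
          rw [pow_succ', mul_assoc]
      _ = (s • X) * (Y * (s • (X + 1)) ^ n) := by rw [ih]
      _ = ((s • X) * Y) * (s • (X + 1)) ^ n := by rw [mul_assoc]
      _ = (Y * (s • (X + 1))) * (s • (X + 1)) ^ n := by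
          rw [smul_mul_assoc, h, ← mul_smul_comm]
      _ = Y * (s • (X + 1)) ^ (n+1) := by rw [pow_succ', mul_assoc]

lemma exp_smul_mul {X Y : 𝔸} (hXY : X * Y - Y * X = Y) (s : ℂ) :
    NormedSpace.exp (s • X) * Y = Complex.exp s • (Y * NormedSpace.exp (s • X)) := by
  rw [sub_eq_iff_eq_add] at hXY
  have h : X * Y = Y * (X + 1) := by rw [mul_add, mul_one, hXY, add_comm]
  have h1 : NormedSpace.exp (s • X) * Y = Y * NormedSpace.exp (s • (X + 1)) := by
    simp only [NormedSpace.exp_eq_tsum ℂ]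
    rw [← (NormedSpace.expSeries_summable' (𝕂 := ℂ) (s • X)).tsum_mul_right Y,
      ← (NormedSpace.expSeries_summable' (𝕂 := ℂ) (s • (X + 1))).tsum_mul_left Y]
    congr 1; funext n
    rw [smul_mul_assoc, pow_mul_eq h, mul_smul_comm]
  have hc : Commute (s • X) (s • (1 : 𝔸)) := by
    simp [Commute, SemiconjBy, mul_smul_comm, smul_mul_assoc]
  have h2 : NormedSpace.exp (s • (X + 1)) =
      NormedSpace.exp (s • X) * (Complex.exp s • 1) := by
    rw [smul_add, NormedSpace.exp_add_of_commute hc]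
    congr 1
    rw [← Algebra.algebraMap_eq_smul_one, ← NormedSpace.algebraMap_exp_comm,
      Algebra.algebraMap_eq_smul_one, Complex.exp_eq_exp_ℂ]
  rw [h1, h2, mul_smul_comm, mul_one, mul_smul_comm]

/-- The exponential of `s • X` as a unit. -/
noncomputable def expUnit (s : ℂ) (X : 𝔸) : 𝔸ˣ where
  val := NormedSpace.exp (s • X)
  inv := NormedSpace.exp (-(s • X))
  val_inv := by
    rw [← NormedSpace.exp_add_of_commute ((Commute.refl _).neg_right), add_neg_cancel,
      NormedSpace.exp_zero]
  inv_val := by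
    rw [← NormedSpace.exp_add_of_commute ((Commute.refl _).neg_left), neg_add_cancel,
      NormedSpace.exp_zero]

lemma exp_smul_mul_exp_smul {X Y : 𝔸} (hXY : X * Y - Y * X = Y) (s t : ℂ) :
    NormedSpace.exp (s • X) * NormedSpace.exp (t • Y) =
      NormedSpace.exp ((t * Complex.exp s) • Y) * NormedSpace.exp (s • X) := by
  set u : 𝔸ˣ := expUnit s X with hu
  have hval : (u : 𝔸) = NormedSpace.exp (s • X) := rfl
  have hconj : (u : 𝔸) * (t • Y) * (↑u⁻¹ : 𝔸) = (t * Complex.exp s) • Y := by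
    rw [hval, mul_smul_comm, exp_smul_mul hXY, smul_smul, smul_mul_assoc, mul_assoc]
    have h1 : (NormedSpace.exp (s • X) : 𝔸) * ↑u⁻¹ = 1 := u.mul_inv
    rw [h1, mul_one, mul_comm t]
  have h2 := NormedSpace.exp_units_conj u (t • Y)
  rw [hconj] at h2
  calc NormedSpace.exp (s • X) * NormedSpace.exp (t • Y)
      = (↑u * NormedSpace.exp (t • Y) * ↑u⁻¹) * ↑u := by
        rw [Units.inv_mul_cancel_right, hval]
    _ = NormedSpace.exp ((t * Complex.exp s) • Y) * NormedSpace.exp (s • X) := by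
        rw [← h2, hval]

lemma exp_neg_eq_one {w : 𝔸} (hw : NormedSpace.exp w = 1) :
    NormedSpace.exp (-w) = 1 := by
  have h := NormedSpace.exp_add_of_commute ((Commute.refl w).neg_left)
  rw [neg_add_cancel, NormedSpace.exp_zero, hw, mul_one] at h
  exact h.symm

lemma exp_int_smul {w : 𝔸} (hw : NormedSpace.exp w = 1) (k : ℤ) :
    NormedSpace.exp ((k : ℂ) • w) = 1 := by
  rw [Int.cast_smul_eq_zsmul]
  cases k with
  | ofNat n =>
    rw [Int.ofNat_eq_coe, natCast_zsmul, NormedSpace.exp_nsmul, hw, one_pow]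
  | negSucc n =>
    rw [Int.negSucc_eq, neg_zsmul,
      show ((n : ℤ) + 1) = ((n + 1 : ℕ) : ℤ) by push_cast; ring, natCast_zsmul]
    exact exp_neg_eq_one (by rw [NormedSpace.exp_nsmul, hw, one_pow])

lemma op_identity (X Y : 𝔸) (hXY : X * Y - Y * X = Y)
    (hX : NormedSpace.exp ((2 * (π : ℂ) * Complex.I) • X) = 1)
    {L₁ L₂ L α β γ e₂ : ℂ} (he₂ : Complex.exp L₂ = e₂) (he₂0 : e₂ ≠ 0)
    (hsum : Complex.exp (L₁ + L₂) = Complex.exp L)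
    (hγ : α / e₂ + β = γ) :
    NormedSpace.exp (L₁ • X) * (NormedSpace.exp (α • Y) *
        (NormedSpace.exp (L₂ • X) * NormedSpace.exp (β • Y))) =
      NormedSpace.exp (L • X) * NormedSpace.exp (γ • Y) := by
  set a := NormedSpace.exp (L₁ • X) with ha
  set b := NormedSpace.exp (α • Y) with hb
  set c := NormedSpace.exp (L₂ • X) with hc
  set d := NormedSpace.exp (β • Y) with hd
  set b' := NormedSpace.exp ((α / e₂) • Y) with hb'
  have hswap : b * c = c * b' := by
    rw [hb, hc, hb', exp_smul_mul_exp_smul hXY L₂ (α / e₂), he₂,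
      div_mul_cancel₀ _ he₂0]
  have comXX : Commute (L₁ • X) (L₂ • X) :=
    ((Commute.refl X).smul_left L₁).smul_right L₂
  have comYY : Commute ((α / e₂) • Y) (β • Y) :=
    ((Commute.refl Y).smul_left _).smul_right _
  obtain ⟨n, hn⟩ := Complex.exp_eq_exp_iff_exists_int.mp hsum
  have hXn : NormedSpace.exp (((n : ℂ) * (2 * (π : ℂ) * Complex.I)) • X) = 1 := by
    have h := exp_int_smul hX n; rwa [smul_smul] at h
  have hac : a * c = NormedSpace.exp (L • X) := by
    rw [ha, hc, ← NormedSpace.exp_add_of_commute comXX, ← add_smul, hn, add_smul,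
      NormedSpace.exp_add_of_commute
        (((Commute.refl X).smul_left _).smul_right _), hXn, mul_one]
  have hbd : b' * d = NormedSpace.exp (γ • Y) := by
    rw [hb', hd, ← NormedSpace.exp_add_of_commute comYY, ← add_smul, hγ]
  calc a * (b * (c * d)) = a * ((b * c) * d) := by rw [mul_assoc b c d]
    _ = a * ((c * b') * d) := by rw [hswap]
    _ = (a * c) * (b' * d) := by simp only [mul_assoc]
    _ = NormedSpace.exp (L • X) * NormedSpace.exp (γ • Y) := by rw [hac, hbd]

end CSaux

set_option maxHeartbeats 2000000 in
/-- If `X ∘ Y - Y ∘ X = Y` and `exp(2πi • X) = 1`, then the combined slash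
action with quadratic multiplier is a right action of `SL₂(ℤ)` on functions
`F : ℍ × ℂ × U → ℂ`. -/
theorem combinedSlash_right_action {U : Type*} [NormedAddCommGroup U] [NormedSpace ℂ U]
    [CompleteSpace U] (X Y : U →L[ℂ] U)
    (hXY : X * Y - Y * X = Y)
    (hX : NormedSpace.exp (((2 * (π : ℂ) * Complex.I)) • X) = 1)
    (m : ℂ) (F : ℍ → ℂ → U → ℂ) (A B : Matrix.SpecialLinearGroup (Fin 2) ℤ)
    (τ : ℍ) (z : ℂ) (u : U) :
    combinedSlash X Y m (combinedSlash X Y m F A) B τ z u =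
      combinedSlash X Y m F (A * B) τ z u := by
  have hjB : ((B 1 0 : ℤ) : ℂ) * (τ : ℂ) + ((B 1 1 : ℤ) : ℂ) ≠ 0 :=
    CSaux.denom_ne_zero' B τ
  have hjA' : ((A 1 0 : ℤ) : ℂ) * ((B • τ : ℍ) : ℂ) + ((A 1 1 : ℤ) : ℂ) ≠ 0 :=
    CSaux.denom_ne_zero' A (B • τ)
  have hdet : ((B 0 0 : ℤ) : ℂ) * ((B 1 1 : ℤ) : ℂ) -
      ((B 0 1 : ℤ) : ℂ) * ((B 1 0 : ℤ) : ℂ) = 1 := CSaux.det_fact B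
  have hweq : ((B • τ : ℍ) : ℂ) * (((B 1 0 : ℤ) : ℂ) * (τ : ℂ) + ((B 1 1 : ℤ) : ℂ)) =
      ((B 0 0 : ℤ) : ℂ) * (τ : ℂ) + ((B 0 1 : ℤ) : ℂ) := by
    rw [CSaux.coe_smul' B τ, div_mul_cancel₀ _ hjB]
  have h10 : (((A * B) 1 0 : ℤ) : ℂ) =
      ((A 1 0 : ℤ) : ℂ) * ((B 0 0 : ℤ) : ℂ) + ((A 1 1 : ℤ) : ℂ) * ((B 1 0 : ℤ) : ℂ) := by
    rw [CSaux.entry_mul]; push_cast; ring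
  have h11 : (((A * B) 1 1 : ℤ) : ℂ) =
      ((A 1 0 : ℤ) : ℂ) * ((B 0 1 : ℤ) : ℂ) + ((A 1 1 : ℤ) : ℂ) * ((B 1 1 : ℤ) : ℂ) := by
    rw [CSaux.entry_mul]; push_cast; ring
  have hcoc : (((A 1 0 : ℤ) : ℂ) * ((B 0 0 : ℤ) : ℂ) + ((A 1 1 : ℤ) : ℂ) * ((B 1 0 : ℤ) : ℂ)) *
        (τ : ℂ) +
        (((A 1 0 : ℤ) : ℂ) * ((B 0 1 : ℤ) : ℂ) + ((A 1 1 : ℤ) : ℂ) * ((B 1 1 : ℤ) : ℂ)) =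
      (((A 1 0 : ℤ) : ℂ) * ((B • τ : ℍ) : ℂ) + ((A 1 1 : ℤ) : ℂ)) *
        (((B 1 0 : ℤ) : ℂ) * (τ : ℂ) + ((B 1 1 : ℤ) : ℂ)) := by
    linear_combination (-((A 1 0 : ℤ) : ℂ)) * hweq
  have hjAB : (((A 1 0 : ℤ) : ℂ) * ((B • τ : ℍ) : ℂ) + ((A 1 1 : ℤ) : ℂ)) *
      (((B 1 0 : ℤ) : ℂ) * (τ : ℂ) + ((B 1 1 : ℤ) : ℂ)) ≠ 0 := mul_ne_zero hjA' hjB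
  simp only [combinedSlash]
  rw [← mul_smul]
  simp only [← ContinuousLinearMap.mul_apply]
  rw [h10, h11, hcoc]
  set w : ℂ := ((B • τ : ℍ) : ℂ) with hwdef
  set cA : ℂ := ((A 1 0 : ℤ) : ℂ) with hcA
  set dA : ℂ := ((A 1 1 : ℤ) : ℂ) with hdA
  set aB : ℂ := ((B 0 0 : ℤ) : ℂ) with haB
  set bB : ℂ := ((B 0 1 : ℤ) : ℂ) with hbB
  set cB : ℂ := ((B 1 0 : ℤ) : ℂ) with hcB
  set dB : ℂ := ((B 1 1 : ℤ) : ℂ) with hdB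
  set jB : ℂ := cB * (τ : ℂ) + dB with hjBdef
  set jA : ℂ := cA * w + dA with hjAdef
  have hH : cB * (jA * jB) + cA = (cA * aB + dA * cB) * jB := by
    linear_combination cA * cB * hweq - cA * hdet
  have hz : z / jB / jA = z / (jA * jB) := by rw [div_div, mul_comm]
  have hE : -2 * (π:ℂ) * Complex.I * m * cB * z ^ 2 / jB +
      -2 * (π:ℂ) * Complex.I * m * cA * (z / jB) ^ 2 / jA =
      -2 * (π:ℂ) * Complex.I * m * (cA * aB + dA * cB) * z ^ 2 / (jA * jB) :=
    CSaux.frac1 _ _ _ _ _ _ _ hjA' hjB hH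
  have hγ : -(cA * (z / jB)) / jA / jB + -(cB * z) / jB =
      -((cA * aB + dA * cB) * z) / (jA * jB) :=
    CSaux.frac2 _ _ _ _ _ _ hjA' hjB hH
  have hsum : Complex.exp (Complex.log jA + Complex.log jB) =
      Complex.exp (Complex.log (jA * jB)) := by
    rw [Complex.exp_add, Complex.exp_log hjA', Complex.exp_log hjB,
      Complex.exp_log hjAB]
  have hop := CSaux.op_identity X Y hXY hX (Complex.exp_log hjB) hjB hsum hγ
  rw [hz, hop, ← mul_assoc, ← Complex.exp_add, hE]
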